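/- arXiv:2103.02919 — 2 statements merged into one kernel-verified Lean document; each statement's English description precedes it below -/
import Mathlib

section
/- Let X, Y, P be lists over an alphabet Σ and let Z be a constrained common subsequence of X and Y with respect to P. Then there exists a constrained alignment (X', Y') of X and Y with respect to P whose alignment score under the distance function δ (δ(a,b) = -1 if a = b and 0 otherwise) is at most the negative of the length of Z. -/
/-- `Z` is a constrained common subsequence of `X` and `Y` with respect to `P`:
`Z` is a sublist (subsequence) of both `X` and `Y`, and `P` is a sublist of `Z`. -/
def CCS {α : Type*} (X Y P Z : List α) : Prop :=
  Z.Sublist X ∧ Z.Sublist Y ∧ P.Sublist Z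

/-- `Z` is a constrained longest common subsequence of `X` and `Y` with respect to `P`. -/
def CLCS {α : Type*} (X Y P Z : List α) : Prop :=
  CCS X Y P Z ∧ ∀ W : List α, CCS X Y P W → W.length ≤ Z.length

/-- The maximum length of a constrained common subsequence of `X` and `Y`
with respect to `P` (meaningful when some CCS exists). -/
noncomputable def clcsLen {α : Type*} (X Y P : List α) : ℕ :=
  sSup {n | ∃ Z : List α, CCS X Y P Z ∧ Z.length = n}

/-- `(X', Y')` is an alignment of `X` and `Y`: equal lengths, removing the spaces
(`none` entries) gives back `X` resp. `Y`, and no column consists of two spaces. -/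
def IsAlignment {σ : Type*} (X Y : List σ) (X' Y' : List (Option σ)) : Prop :=
  X'.length = Y'.length ∧
  X'.filterMap id = X ∧
  Y'.filterMap id = Y ∧
  ∀ p ∈ X'.zip Y', ¬(p.1 = none ∧ p.2 = none)

/-- The list of matching-column characters of an alignment. -/
def matchCols {σ : Type*} [DecidableEq σ] (X' Y' : List (Option σ)) : List σ :=
  (X'.zip Y').filterMap (fun p => if p.1 = p.2 then p.1 else none)

/-- `(X', Y')` is a constrained alignment of `X` and `Y` with respect to `P`. -/
def IsConstrainedAlignment {σ : Type*} [DecidableEq σ] (X Y P : List σ)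
    (X' Y' : List (Option σ)) : Prop :=
  IsAlignment X Y X' Y' ∧ P.Sublist (matchCols X' Y')

/-- The alignment score of `(X', Y')` under a distance function `δ`. -/
def score {σ : Type*} (δ : Option σ → Option σ → ℤ) (X' Y' : List (Option σ)) : ℤ :=
  ((X'.zip Y').map (fun p => δ p.1 p.2)).sum

/-- The distance function: `-1` on a match, `0` otherwise. -/
def delta {σ : Type*} [DecidableEq σ] (a b : Option σ) : ℤ :=
  if a = b then -1 else 0

lemma matchCols_cons {σ : Type*} [DecidableEq σ] (a b : Option σ) (A B : List (Option σ)) :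
    matchCols (a :: A) (b :: B) = (if a = b then a.toList else []) ++ matchCols A B := by
  simp [matchCols, List.filterMap]
  split <;> simp_all [Option.toList, List.zip]

lemma score_cons {σ : Type*} (δ : Option σ → Option σ → ℤ) (a b : Option σ)
    (A B : List (Option σ)) :
    score δ (a :: A) (b :: B) = δ a b + score δ A B := by
  simp [score]

lemma aux {σ : Type*} [DecidableEq σ] :
    ∀ {Z X : List σ}, Z.Sublist X → ∀ Y : List σ, Z.Sublist Y →
    ∃ X' Y' : List (Option σ), IsAlignment X Y X' Y' ∧ Z.Sublist (matchCols X' Y') ∧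
      score delta X' Y' ≤ -(Z.length : ℤ) := by
  intro Z X hX
  induction hX with
  | slnil =>
    intro Y _
    refine ⟨Y.map (fun _ => none), Y.map some, ⟨by simp, by simp, by simp, ?_⟩, ?_, ?_⟩
    · intro p hp
      rw [List.zip_map] at hp
      obtain ⟨q, _, rfl⟩ := List.mem_map.mp hp
      simp
    · have : matchCols (Y.map (fun _ => none)) (Y.map some) = [] := by
        rw [matchCols, List.zip_map]
        simp [List.filterMap_map]
      simp [this]
    · have : score delta (Y.map (fun _ => none)) (Y.map some) = 0 := by
        rw [score, List.zip_map, List.map_map]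
        have : ((fun p : Option σ × Option σ => delta p.1 p.2) ∘
            Prod.map (fun _ : σ => (none : Option σ)) (some : σ → Option σ)) =
            fun _ : σ × σ => (0 : ℤ) := by
          funext q; simp [delta]
        rw [this]; simp
      simp only [List.map_const'] at this ⊢
      simp [this]
  | cons x hX ih =>
    intro Y hY
    obtain ⟨A, B, ⟨h1, h2, h3, h4⟩, hm, hs⟩ := ih Y hY
    refine ⟨some x :: A, none :: B, ⟨by simp [h1], by simpa using h2, by simpa using h3, ?_⟩, ?_, ?_⟩
    · intro p hp
      rcases List.mem_cons.mp (by simpa [List.zip] using hp) with rfl | hp'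
      · simp
      · exact h4 p (by simpa [List.zip] using hp')
    · rw [matchCols_cons]; simpa using hm
    · rw [score_cons]
      have : delta (some x) (none : Option σ) = 0 := by simp [delta]
      omega
  | @cons_cons Z₁ X₁ c hX ih =>
    intro Y
    induction Y with
    | nil => intro hY; exact absurd (List.eq_nil_of_sublist_nil hY) (by simp)
    | cons y Y₁ ihY =>
      intro hY
      cases hY with
      | cons _ hY' =>
        obtain ⟨A, B, ⟨h1, h2, h3, h4⟩, hm, hs⟩ := ihY hY'
        refine ⟨none :: A, some y :: B, ⟨by simp [h1], by simpa using h2, by simpa using h3, ?_⟩, ?_, ?_⟩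
        · intro p hp
          rcases List.mem_cons.mp (by simpa [List.zip] using hp) with rfl | hp'
          · simp
          · exact h4 p (by simpa [List.zip] using hp')
        · rw [matchCols_cons]; simpa using hm
        · rw [score_cons]
          have : delta (none : Option σ) (some y) = 0 := by simp [delta]
          omega
      | cons_cons _ hY' =>
        obtain ⟨A, B, ⟨h1, h2, h3, h4⟩, hm, hs⟩ := ih Y₁ hY'
        refine ⟨some c :: A, some c :: B, ⟨by simp [h1], by simpa using h2, by simpa using h3, ?_⟩, ?_, ?_⟩
        · intro p hp
          rcases List.mem_cons.mp (by simpa [List.zip] using hp) with rfl | hp'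
          · simp
          · exact h4 p (by simpa [List.zip] using hp')
        · rw [matchCols_cons]
          simpa [Option.toList] using List.Sublist.cons_cons c hm
        · rw [score_cons]
          have : delta (some c) (some c) = -1 := by simp [delta]
          simp only [List.length_cons]
          push_cast
          omega

theorem ccs_to_alignment {σ : Type*} [DecidableEq σ] (X Y P Z : List σ)
    (h : CCS X Y P Z) :
    ∃ X' Y' : List (Option σ), IsConstrainedAlignment X Y P X' Y' ∧
      score delta X' Y' ≤ -(Z.length : ℤ) := by
  obtain ⟨hX, hY, hP⟩ := h
  obtain ⟨X', Y', hAl, hm, hs⟩ := aux hX Y hY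
  exact ⟨X', Y', ⟨hAl, hP.trans hm⟩, hs⟩
end

section
/- Let X, Y, P be lists over an alphabet Σ such that P is a subsequence of both X and Y. Then the minimum, over all constrained alignments (X', Y') of X and Y with respect to P, of the alignment score under the distance function δ (δ(a,b) = -1 if a = b and 0 otherwise) equals the negative of clcsLen X Y P, the maximum length of a constrained common subsequence of X and Y with respect to P. -/
section Aux
open List
variable {σ : Type*} [DecidableEq σ]

lemma filterMap_const_none {α β : Type*} (l : List α) :
    l.filterMap (fun _ => (none : Option β)) = [] := by
  induction l <;> simp [*]

lemma filterMap_sublist_of_imp {α β : Type*} (f g : α → Option β)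
    (h : ∀ a b, f a = some b → g a = some b) (L : List α) :
    L.filterMap f <+ L.filterMap g := by
  induction L with
  | nil => simp
  | cons x L ih =>
    rw [List.filterMap_cons, List.filterMap_cons]
    cases hf : f x with
    | none =>
      cases g x with
      | none => exact ih
      | some b => exact ih.trans (List.sublist_cons_self _ _)
    | some b => rw [h x b hf]; exact ih.cons₂ _

lemma matchCols_sublist_left (X' Y' : List (Option σ)) (h : X'.length = Y'.length) :
    matchCols X' Y' <+ X'.filterMap id := by
  have h1 : matchCols X' Y' <+ (X'.zip Y').filterMap (fun p => p.1) := by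
    apply filterMap_sublist_of_imp
    intro a b hb
    by_cases hc : a.1 = a.2
    · rw [if_pos hc] at hb; exact hb
    · rw [if_neg hc] at hb; exact absurd hb (by simp)
  have h2 : (X'.zip Y').filterMap (fun p => p.1) = X'.filterMap id := by
    have : X'.filterMap id = ((X'.zip Y').map Prod.fst).filterMap id := by
      rw [List.map_fst_zip (le_of_eq h)]
    rw [this, List.filterMap_map]; rfl
  rw [← h2]; exact h1

lemma matchCols_sublist_right (X' Y' : List (Option σ)) (h : X'.length = Y'.length) :
    matchCols X' Y' <+ Y'.filterMap id := by
  have h1 : matchCols X' Y' <+ (X'.zip Y').filterMap (fun p => p.2) := by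
    apply filterMap_sublist_of_imp
    intro a b hb
    by_cases hc : a.1 = a.2
    · rw [if_pos hc] at hb; rw [← hc]; exact hb
    · rw [if_neg hc] at hb; exact absurd hb (by simp)
  have h2 : (X'.zip Y').filterMap (fun p => p.2) = Y'.filterMap id := by
    have : Y'.filterMap id = ((X'.zip Y').map Prod.snd).filterMap id := by
      rw [List.map_snd_zip (le_of_eq h.symm)]
    rw [this, List.filterMap_map]; rfl
  rw [← h2]; exact h1

lemma sum_delta_eq (L : List (Option σ × Option σ))
    (h : ∀ p ∈ L, ¬(p.1 = none ∧ p.2 = none)) :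
    (L.map (fun p => delta p.1 p.2)).sum
      = -((L.filterMap (fun p => if p.1 = p.2 then p.1 else none)).length : ℤ) := by
  induction L with
  | nil => simp
  | cons p L ih =>
    have hL := ih (fun q hq => h q (List.mem_cons_of_mem _ hq))
    rw [List.map_cons, List.sum_cons, List.filterMap_cons]
    have hde : delta p.1 p.2 = if p.1 = p.2 then -1 else 0 := rfl
    by_cases hc : p.1 = p.2
    · have hp1 : p.1 ≠ none := by
        intro hn; exact h p (List.mem_cons_self) ⟨hn, hc ▸ hn⟩
      obtain ⟨c, hco⟩ := Option.ne_none_iff_exists'.mp hp1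
      rw [hde, if_pos hc, if_pos hc, hco]
      simp only [List.length_cons, hL]
      push_cast; ring
    · rw [hde, if_neg hc, if_neg hc, hL]; ring

lemma exists_split {z : σ} : ∀ {Z X : List σ}, (z :: Z) <+ X →
    ∃ A X₁, X = A ++ z :: X₁ ∧ Z <+ X₁ := by
  intro Z X h
  induction X with
  | nil => simp at h
  | cons x X ih =>
    rcases List.cons_sublist_cons'.mp h with h' | ⟨rfl, h'⟩
    · obtain ⟨A, X₁, rfl, hZ⟩ := ih h'
      exact ⟨x :: A, X₁, rfl, hZ⟩
    · exact ⟨[], X, rfl, h'⟩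

lemma exists_alignment : ∀ (Z X Y : List σ), Z <+ X → Z <+ Y →
    ∃ X' Y', IsAlignment X Y X' Y' ∧ matchCols X' Y' = Z := by
  intro Z
  induction Z with
  | nil =>
    intro X Y _ _
    refine ⟨X.map some ++ List.replicate Y.length none,
           List.replicate X.length none ++ Y.map some, ⟨?_, ?_, ?_, ?_⟩, ?_⟩
    · simp
    · simp
    · simp
    · intro p hp
      rw [List.zip_append (by simp)] at hp
      rcases List.mem_append.mp hp with hp | hp
      · obtain ⟨hm1, -⟩ := List.of_mem_zip hp
        rintro ⟨hh, -⟩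
        rw [hh] at hm1; simp at hm1
      · obtain ⟨-, hm2⟩ := List.of_mem_zip hp
        rintro ⟨-, hh⟩
        rw [hh] at hm2; simp at hm2
    · unfold matchCols
      rw [List.zip_append (by simp)]
      rw [List.filterMap_append]
      have e1 : List.replicate Y.length (none : Option σ) = Y.map (fun _ => none) := by
        simp [List.eq_replicate_iff]
      have e2 : List.replicate X.length (none : Option σ) = X.map (fun _ => none) := by
        simp [List.eq_replicate_iff]
      rw [e1, e2, List.zip_map', List.zip_map', List.filterMap_map, List.filterMap_map]
      simp
  | cons z Z ih =>
    intro X Y hx hy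
    obtain ⟨A, X₁, rfl, hx₁⟩ := exists_split hx
    obtain ⟨B, Y₁, rfl, hy₁⟩ := exists_split hy
    obtain ⟨X₁', Y₁', ⟨hlen, hfx, hfy, hno⟩, hmc⟩ := ih X₁ Y₁ hx₁ hy₁
    refine ⟨A.map some ++ List.replicate B.length none ++ some z :: X₁',
           List.replicate A.length none ++ B.map some ++ some z :: Y₁', ⟨?_, ?_, ?_, ?_⟩, ?_⟩
    · simp [hlen]
    · simp [hfx]; exact hfx
    · simp [hfy]; exact hfy
    · intro p hp
      rw [List.zip_append (by simp), List.zip_append (by simp)] at hp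
      rcases List.mem_append.mp hp with hp' | hp'
      · rcases List.mem_append.mp hp' with hq | hq
        · obtain ⟨hm1, -⟩ := List.of_mem_zip hq
          rintro ⟨hh, -⟩; rw [hh] at hm1; simp at hm1
        · obtain ⟨-, hm2⟩ := List.of_mem_zip hq
          rintro ⟨-, hh⟩; rw [hh] at hm2; simp at hm2
      · rcases List.mem_cons.mp hp' with rfl | hq
        · rintro ⟨h1, -⟩; exact absurd h1 (by simp)
        · exact hno p hq
    · unfold matchCols
      rw [List.zip_append (by simp), List.zip_append (by simp),
        List.filterMap_append, List.filterMap_append]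
      have e1 : List.replicate B.length (none : Option σ) = B.map (fun _ => none) := by
        simp [List.eq_replicate_iff]
      have e2 : List.replicate A.length (none : Option σ) = A.map (fun _ => none) := by
        simp [List.eq_replicate_iff]
      rw [e1, e2, List.zip_map', List.zip_map', List.filterMap_map, List.filterMap_map,
        List.zip_cons_cons, List.filterMap_cons]
      unfold matchCols at hmc
      simp [hmc, Function.comp_def, filterMap_const_none]

end Aux

theorem min_alignment_score_eq_neg_clcsLen {σ : Type*} [DecidableEq σ]
    (X Y P : List σ) (h1 : P.Sublist X) (h2 : P.Sublist Y) :
    sInf {s : ℤ | ∃ X' Y' : List (Option σ),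
        IsConstrainedAlignment X Y P X' Y' ∧ score delta X' Y' = s}
      = -(clcsLen X Y P : ℤ) := by
  set T := {n | ∃ Z : List σ, CCS X Y P Z ∧ Z.length = n} with hT
  have hTne : T.Nonempty := ⟨P.length, P, ⟨h1, h2, List.Sublist.refl P⟩, rfl⟩
  have hTbdd : BddAbove T := by
    refine ⟨X.length, fun n hn => ?_⟩
    obtain ⟨Z, ⟨hZX, -, -⟩, rfl⟩ := hn
    exact hZX.length_le
  have hmem : clcsLen X Y P ∈ T := Nat.sSup_mem hTne hTbdd
  obtain ⟨Z, hZccs, hZlen⟩ := hmem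
  -- score of any constrained alignment equals -(matchCols length)
  have score_eq : ∀ X' Y' : List (Option σ), IsAlignment X Y X' Y' →
      score delta X' Y' = -((matchCols X' Y').length : ℤ) := by
    intro X' Y' ⟨hlen, hfx, hfy, hno⟩
    exact sum_delta_eq _ hno
  set S := {s : ℤ | ∃ X' Y' : List (Option σ),
      IsConstrainedAlignment X Y P X' Y' ∧ score delta X' Y' = s} with hS
  have hlb : ∀ s ∈ S, -(clcsLen X Y P : ℤ) ≤ s := by
    rintro s ⟨X', Y', ⟨hal, hPsub⟩, rfl⟩
    rw [score_eq X' Y' hal]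
    have hccs : CCS X Y P (matchCols X' Y') := by
      refine ⟨?_, ?_, hPsub⟩
      · have := matchCols_sublist_left X' Y' hal.1
        rwa [hal.2.1] at this
      · have := matchCols_sublist_right X' Y' hal.1
        rwa [hal.2.2.1] at this
    have : (matchCols X' Y').length ≤ clcsLen X Y P :=
      le_csSup hTbdd ⟨matchCols X' Y', hccs, rfl⟩
    omega
  have hmemS : -(clcsLen X Y P : ℤ) ∈ S := by
    obtain ⟨X', Y', hal, hmc⟩ := exists_alignment Z X Y hZccs.1 hZccs.2.1
    refine ⟨X', Y', ⟨hal, hmc ▸ hZccs.2.2⟩, ?_⟩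
    rw [score_eq X' Y' hal, hmc, hZlen]
  exact le_antisymm (csInf_le ⟨_, hlb⟩ hmemS) (le_csInf ⟨_, hmemS⟩ hlb)
end
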